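/- arXiv:math/0508175 — 2 statements merged into one kernel-verified Lean document; each statement's English description precedes it below -/
import Mathlib

section
/- The ℚ-linear extension of τ to ℚ ⊗ L maps the dual lattice L⊥ onto itself, and it permutes the cosets of L in L⊥ as follows: for each j = 0, 1, 2 the coset L^j = d_j + L (where d₀ = 0, d₁ = (−β₁+β₂)/3, d₂ = (β₁−β₂)/3) is mapped onto itself, while τ(β₂/2 + L^j) = β₀/2 + L^j, τ(β₀/2 + L^j) = β₁/2 + L^j, and τ(β₁/2 + L^j) = β₂/2 + L^j; in particular exactly three of the twelve cosets of L in L⊥ are τ-stable and the remaining nine fall into three τ-orbits of length 3. -/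
/-- The bilinear form of `√2 A₂` extended `ℚ`-bilinearly to `ℚ ⊗ L = ℚ²`. -/
def Bq (x y : ℚ × ℚ) : ℚ :=
  4 * x.1 * y.1 - 2 * x.1 * y.2 - 2 * x.2 * y.1 + 4 * x.2 * y.2

/-- The lattice `L = √2 A₂ = ℤβ₁ ⊕ ℤβ₂`, viewed as a subgroup of `ℚ ⊗ L = ℚ²`. -/
def Lq : AddSubgroup (ℚ × ℚ) where
  carrier := {x | ∃ a b : ℤ, x = ((a : ℚ), (b : ℚ))}
  zero_mem' := ⟨0, 0, by ext <;> simp⟩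
  add_mem' := by
    rintro x y ⟨a, b, rfl⟩ ⟨c, d, rfl⟩
    exact ⟨a + c, b + d, by push_cast; rfl⟩
  neg_mem' := by
    rintro x ⟨a, b, rfl⟩
    exact ⟨-a, -b, by push_cast; rfl⟩

/-- The dual lattice `L⊥ = {x ∈ ℚ ⊗ L : ⟨x, y⟩ ∈ ℤ for all y ∈ L}`. -/
def Ldual : AddSubgroup (ℚ × ℚ) where
  carrier := {x | ∀ y ∈ Lq, ∃ n : ℤ, Bq x y = (n : ℚ)}
  zero_mem' := by
    intro y _
    exact ⟨0, by simp [Bq]⟩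
  add_mem' := by
    intro x x' hx hx' y hy
    obtain ⟨m, hm⟩ := hx y hy
    obtain ⟨n, hn⟩ := hx' y hy
    refine ⟨m + n, ?_⟩
    have h : Bq (x + x') y = Bq x y + Bq x' y := by simp [Bq]; ring
    rw [h, hm, hn]; push_cast; ring
  neg_mem' := by
    intro x hx y hy
    obtain ⟨m, hm⟩ := hx y hy
    refine ⟨-m, ?_⟩
    have h : Bq (-x) y = -Bq x y := by simp [Bq]; ring
    rw [h, hm]; push_cast; ring


/-- The coset `v + L` of the lattice `L` in `ℚ ⊗ L = ℚ²`. -/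
def coset (v : ℚ × ℚ) : Set (ℚ × ℚ) := {x | x - v ∈ Lq}

lemma tau_formula (τ : (ℚ × ℚ) →ₗ[ℚ] (ℚ × ℚ))
    (hτ1 : τ (1, 0) = (0, 1)) (hτ2 : τ (0, 1) = (-1, -1)) (x : ℚ × ℚ) :
    τ x = (-x.2, x.1 - x.2) := by
  have hx : x = x.1 • ((1 : ℚ), (0 : ℚ)) + x.2 • ((0 : ℚ), (1 : ℚ)) := by
    simp [Prod.ext_iff]
  rw [hx, map_add, map_smul, map_smul, hτ1, hτ2]
  simp [Prod.ext_iff]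
  ring

lemma lq_tau {x : ℚ × ℚ} (hx : x ∈ Lq) : ((-x.2, x.1 - x.2) : ℚ × ℚ) ∈ Lq := by
  obtain ⟨a, b, rfl⟩ := hx
  exact ⟨-b, a - b, by push_cast; rfl⟩

lemma image_coset (τ : (ℚ × ℚ) →ₗ[ℚ] (ℚ × ℚ))
    (hτ : ∀ x, τ x = (-x.2, x.1 - x.2)) (v : ℚ × ℚ) :
    τ '' coset v = coset (τ v) := by
  ext x
  constructor
  · rintro ⟨w, hw, rfl⟩
    have : τ w - τ v = τ (w - v) := (map_sub τ w v).symm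
    show τ w - τ v ∈ Lq
    rw [this, hτ]
    exact lq_tau hw
  · intro hx
    obtain ⟨a, b, hab⟩ := hx
    refine ⟨v + ((b : ℚ) - (a : ℚ), -(a : ℚ)), ⟨b - a, -a, by push_cast; simp⟩, ?_⟩
    have hx2 : x = τ v + ((a : ℚ), (b : ℚ)) := by
      have : x - τ v + τ v = ((a : ℚ), (b : ℚ)) + τ v := by rw [hab]
      simpa [add_comm] using this
    rw [hx2, map_add]
    simp only [hτ, Prod.ext_iff, Prod.fst_add, Prod.snd_add]
    constructor <;> (simp; try ring)

lemma coset_eq_of {v w : ℚ × ℚ} (h : v - w ∈ Lq) : coset v = coset w := by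
  ext x
  constructor <;> intro hx
  · have := add_mem hx h
    exact (by simpa using this : x - w ∈ Lq)
  · have h2 := sub_mem hx h
    have : x - w - (v - w) = x - v := by abel
    rwa [this] at h2

lemma coset_eq_iff {v w : ℚ × ℚ} : coset v = coset w ↔ v - w ∈ Lq := by
  constructor
  · intro h
    have hv : v ∈ coset v := by
      simp only [coset, Set.mem_setOf_eq, sub_self]; exact zero_mem _
    rw [h] at hv
    exact hv
  · exact coset_eq_of

lemma mem_Ldual_iff' (x : ℚ × ℚ) :
    (∀ y ∈ Lq, ∃ n : ℤ, Bq x y = (n : ℚ)) ↔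
      (∃ m : ℤ, 4 * x.1 - 2 * x.2 = (m : ℚ)) ∧ (∃ n : ℤ, -2 * x.1 + 4 * x.2 = (n : ℚ)) := by
  constructor
  · intro h
    obtain ⟨m, hm⟩ := h (1, 0) ⟨1, 0, by norm_num⟩
    obtain ⟨n, hn⟩ := h (0, 1) ⟨0, 1, by norm_num⟩
    exact ⟨⟨m, by rw [← hm]; simp [Bq]; try ring⟩, ⟨n, by rw [← hn]; simp [Bq]; try ring⟩⟩
  · rintro ⟨⟨m, hm⟩, ⟨n, hn⟩⟩ y ⟨a, b, rfl⟩
    refine ⟨a * m + b * n, ?_⟩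
    push_cast
    rw [← hm, ← hn]
    simp [Bq]; ring
lemma mem_Ldual_iff (x : ℚ × ℚ) :
    x ∈ Ldual ↔
      (∃ m : ℤ, 4 * x.1 - 2 * x.2 = (m : ℚ)) ∧ (∃ n : ℤ, -2 * x.1 + 4 * x.2 = (n : ℚ)) := by
  exact mem_Ldual_iff' x

lemma not_mem_Lq_fst {x : ℚ × ℚ} (h : ∃ k : ℤ, x.1 = (k : ℚ) + 1/2) : x ∉ Lq := by
  rintro ⟨a, b, rfl⟩
  obtain ⟨k, hk⟩ := h
  have h2 : (2 * a : ℚ) = 2 * k + 1 := by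
    simp only at hk; rw [hk]; ring
  have h3 : (2 * a : ℤ) = 2 * k + 1 := by exact_mod_cast h2
  omega

lemma not_mem_Lq_snd {x : ℚ × ℚ} (h : ∃ k : ℤ, x.2 = (k : ℚ) + 1/2) : x ∉ Lq := by
  rintro ⟨a, b, rfl⟩
  obtain ⟨k, hk⟩ := h
  have h2 : (2 * b : ℚ) = 2 * k + 1 := by
    simp only at hk; rw [hk]; ring
  have h3 : (2 * b : ℤ) = 2 * k + 1 := by exact_mod_cast h2
  omega


/-- The `ℚ`-linear extension of `τ` (determined by `τβ₁ = β₂`,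
`τβ₂ = β₀`) maps the dual lattice `L⊥` onto itself and permutes the cosets of `L` in
`L⊥` as follows: each coset `L^j = d_j + L` (`d₀ = 0`, `d₁ = (−β₁+β₂)/3`,
`d₂ = (β₁−β₂)/3`) is mapped onto itself, while `τ(β₂/2 + L^j) = β₀/2 + L^j`,
`τ(β₀/2 + L^j) = β₁/2 + L^j`, `τ(β₁/2 + L^j) = β₂/2 + L^j`.  In particular, among the
twelve cosets `c + d + L` (`c ∈ {0, β₂/2, β₀/2, β₁/2}`, `d ∈ {d₀, d₁, d₂}`) exactly the
three with `c = 0` are `τ`-stable, and the remaining nine fall into three `τ`-orbits of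
length 3. -/
theorem sqrt2A2_tau_permutes_dual_cosets
    (τ : (ℚ × ℚ) →ₗ[ℚ] (ℚ × ℚ))
    (hτ1 : τ (1, 0) = (0, 1)) (hτ2 : τ (0, 1) = (-1, -1)) :
    let C : Set (ℚ × ℚ) := {(0, 0), (0, 1/2), (-1/2, -1/2), (1/2, 0)}
    let D : Set (ℚ × ℚ) := {(0, 0), (-1/3, 1/3), (1/3, -1/3)}
    (τ '' (Ldual : Set (ℚ × ℚ)) = (Ldual : Set (ℚ × ℚ))) ∧
    (∀ d ∈ D,
      τ '' coset d = coset d ∧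
      τ '' coset ((0, 1/2) + d) = coset ((-1/2, -1/2) + d) ∧
      τ '' coset ((-1/2, -1/2) + d) = coset ((1/2, 0) + d) ∧
      τ '' coset ((1/2, 0) + d) = coset ((0, 1/2) + d)) ∧
    (∀ c ∈ C, ∀ d ∈ D, (τ '' coset (c + d) = coset (c + d) ↔ c = 0)) := by
  intro C D
  have hτ := tau_formula τ hτ1 hτ2
  refine ⟨?_, ?_, ?_⟩
  · -- τ '' Ldual = Ldual
    ext x
    constructor
    · rintro ⟨w, hw, rfl⟩
      obtain ⟨⟨m, hm⟩, ⟨n, hn⟩⟩ := (mem_Ldual_iff w).1 hw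
      refine (mem_Ldual_iff (τ w)).2 ⟨⟨-(m + n), ?_⟩, ⟨m, ?_⟩⟩
      · rw [hτ]; push_cast; linarith
      · rw [hτ]; push_cast; linarith
    · intro hx
      obtain ⟨⟨m, hm⟩, ⟨n, hn⟩⟩ := (mem_Ldual_iff x).1 hx
      refine ⟨(x.2 - x.1, -x.1), ?_, ?_⟩
      · refine (mem_Ldual_iff _).2 ⟨⟨n, ?_⟩, ⟨-(m + n), ?_⟩⟩
        · push_cast; linarith
        · push_cast; linarith
      · rw [hτ]; simp
  · -- the permutation of cosets
    intro d hd
    simp only [D, Set.mem_insert_iff, Set.mem_singleton_iff] at hd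
    rcases hd with rfl | rfl | rfl <;>
      refine ⟨?_, ?_, ?_, ?_⟩ <;>
      rw [image_coset τ hτ] <;>
      apply coset_eq_of
    · exact ⟨0, 0, by rw [hτ]; norm_num [Prod.ext_iff]⟩
    · exact ⟨0, 0, by rw [hτ]; norm_num [Prod.ext_iff]⟩
    · exact ⟨0, 0, by rw [hτ]; norm_num [Prod.ext_iff]⟩
    · exact ⟨0, 0, by rw [hτ]; norm_num [Prod.ext_iff]⟩
    · exact ⟨0, -1, by rw [hτ]; norm_num [Prod.ext_iff]⟩
    · exact ⟨0, -1, by rw [hτ]; norm_num [Prod.ext_iff]⟩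
    · exact ⟨0, -1, by rw [hτ]; norm_num [Prod.ext_iff]⟩
    · exact ⟨0, -1, by rw [hτ]; norm_num [Prod.ext_iff]⟩
    · exact ⟨0, 1, by rw [hτ]; norm_num [Prod.ext_iff]⟩
    · exact ⟨0, 1, by rw [hτ]; norm_num [Prod.ext_iff]⟩
    · exact ⟨0, 1, by rw [hτ]; norm_num [Prod.ext_iff]⟩
    · exact ⟨0, 1, by rw [hτ]; norm_num [Prod.ext_iff]⟩
  · -- stability criterion
    intro c hc d hd
    simp only [C, Set.mem_insert_iff, Set.mem_singleton_iff] at hc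
    simp only [D, Set.mem_insert_iff, Set.mem_singleton_iff] at hd
    rw [image_coset τ hτ, coset_eq_iff]
    rcases hc with rfl | rfl | rfl | rfl <;> rcases hd with rfl | rfl | rfl
    · exact iff_of_true ⟨0, 0, by rw [hτ]; norm_num [Prod.ext_iff]⟩ rfl
    · exact iff_of_true ⟨0, -1, by rw [hτ]; norm_num [Prod.ext_iff]⟩ rfl
    · exact iff_of_true ⟨0, 1, by rw [hτ]; norm_num [Prod.ext_iff]⟩ rfl
    all_goals refine iff_of_false ?_ (by simp [Prod.ext_iff])
    -- c = (0,1/2): first coordinate is -1/2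
    · exact not_mem_Lq_fst ⟨-1, by rw [hτ]; norm_num⟩
    · exact not_mem_Lq_fst ⟨-1, by rw [hτ]; norm_num⟩
    · exact not_mem_Lq_fst ⟨-1, by rw [hτ]; norm_num⟩
    -- c = (-1/2,-1/2): second coordinate is 1/2 + integer
    · exact not_mem_Lq_snd ⟨0, by rw [hτ]; norm_num⟩
    · exact not_mem_Lq_snd ⟨-1, by rw [hτ]; norm_num⟩
    · exact not_mem_Lq_snd ⟨1, by rw [hτ]; norm_num⟩
    -- c = (1/2,0): first coordinate is -1/2
    · exact not_mem_Lq_fst ⟨-1, by rw [hτ]; norm_num⟩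
    · exact not_mem_Lq_fst ⟨-1, by rw [hτ]; norm_num⟩
    · exact not_mem_Lq_fst ⟨-1, by rw [hτ]; norm_num⟩
end

section
/- In the coset (−β₁+β₂)/3 + L of L in ℚ ⊗ L, the minimum of the norm ⟨x,x⟩ equals 4/3, and it is attained at exactly three vectors, namely (−β₁+β₂)/3, (−β₂+β₀)/3, and (−β₀+β₁)/3 (these three vectors are congruent to one another modulo L, and every other element x of the coset satisfies ⟨x,x⟩ > 4/3). -/
lemma key (a b : ℤ) : 0 ≤ a^2 - a*b + b^2 - a + b := by
  by_contra h
  push_neg at h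
  have hm : a^2 - a*b + b^2 - a + b ≤ -1 := by omega
  have h1 : (a-1)^2 ≤ 0 := by nlinarith [sq_nonneg (a-b), sq_nonneg (b+1)]
  have h2 : (b+1)^2 ≤ 0 := by nlinarith [sq_nonneg (a-b), sq_nonneg (a-1)]
  have ha : a = 1 := by nlinarith [sq_nonneg (a-1)]
  have hb : b = -1 := by nlinarith [sq_nonneg (b+1)]
  subst ha hb; omega

lemma key2 (a b : ℤ) (h : a^2 - a*b + b^2 - a + b = 0) :
    (a = 0 ∧ b = 0) ∨ (a = 0 ∧ b = -1) ∨ (a = 1 ∧ b = 0) := by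
  have h1 : (a-1)^2 ≤ 2 := by nlinarith [sq_nonneg (a-b), sq_nonneg (b+1)]
  have h2 : (b+1)^2 ≤ 2 := by nlinarith [sq_nonneg (a-b), sq_nonneg (a-1)]
  have ha0 : 0 ≤ a := by nlinarith
  have ha2 : a ≤ 2 := by nlinarith
  have hb0 : -2 ≤ b := by nlinarith
  have hb2 : b ≤ 0 := by nlinarith
  interval_cases a <;> interval_cases b <;> omega

/-- In the coset `(−β₁+β₂)/3 + L` of `L = √2 A₂` in `ℚ ⊗ L`, the
minimum of the norm `⟨x,x⟩` equals `4/3`, attained at exactly the three vectors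
`(−β₁+β₂)/3 = (−1/3, 1/3)`, `(−β₂+β₀)/3 = (−1/3, −2/3)`, and
`(−β₀+β₁)/3 = (2/3, 1/3)`. -/
theorem sqrt2A2_coset_min_norm_four_thirds :
    (∀ x : ℚ × ℚ, x - (-1/3, 1/3) ∈ Lq → 4/3 ≤ Bq x x) ∧
    {x : ℚ × ℚ | x - (-1/3, 1/3) ∈ Lq ∧ Bq x x = 4/3} =
      {((-1/3 : ℚ), (1/3 : ℚ)), (-1/3, -2/3), (2/3, 1/3)} := by
  constructor
  · rintro x ⟨a, b, hab⟩
    have h1 : x.1 = (a : ℚ) - 1/3 := by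
      have := congrArg Prod.fst hab; simp at this; linarith
    have h2 : x.2 = (b : ℚ) + 1/3 := by
      have := congrArg Prod.snd hab; simp at this; linarith
    have hk : (0 : ℚ) ≤ (a:ℚ)^2 - a*b + b^2 - a + b := by
      exact_mod_cast key a b
    simp only [Bq, h1, h2]
    nlinarith
  · ext x
    simp only [Set.mem_setOf_eq, Set.mem_insert_iff, Set.mem_singleton_iff]
    constructor
    · rintro ⟨⟨a, b, hab⟩, hq⟩
      have h1 : x.1 = (a : ℚ) - 1/3 := by
        have := congrArg Prod.fst hab; simp at this; linarith
      have h2 : x.2 = (b : ℚ) + 1/3 := by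
        have := congrArg Prod.snd hab; simp at this; linarith
      simp only [Bq, h1, h2] at hq
      have hz : (a:ℚ)^2 - a*b + b^2 - a + b = 0 := by nlinarith
      have hz' : a^2 - a*b + b^2 - a + b = 0 := by exact_mod_cast hz
      have hx : x = ((a:ℚ) - 1/3, (b:ℚ) + 1/3) := Prod.ext h1 h2
      rcases key2 a b hz' with ⟨ha, hb⟩ | ⟨ha, hb⟩ | ⟨ha, hb⟩ <;>
        subst ha <;> subst hb <;> [left; (right;left); (right;right)] <;>
        · rw [hx]; norm_num
    · rintro (rfl | rfl | rfl)
      · exact ⟨⟨0, 0, by norm_num [Prod.ext_iff]⟩, by norm_num [Bq]⟩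
      · exact ⟨⟨0, -1, by norm_num [Prod.ext_iff]⟩, by norm_num [Bq]⟩
      · exact ⟨⟨1, 0, by norm_num [Prod.ext_iff]⟩, by norm_num [Bq]⟩
end
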